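/- Let (X, d) be a metric space, f : X × U → X a dynamics map, ℓ : X × U → ℝ a stage cost, (x_s, u_s) a steady state with f(x_s,u_s) = x_s, Λ : X → ℝ a storage function bounded in absolute value by C/2 on the relevant set, and α : ℝ≥0 → ℝ≥0 strictly increasing with α(0)=0. Suppose the strict dissipation inequality Λ(f(x_k,u_k)) - Λ(x_k) ≤ -α(‖(x_k - x_s, u_k - u_s)‖) + ℓ(x_k,u_k) - ℓ(x_s,u_s) holds along a trajectory (x_k, u_k), k = 0,…,N-1, with x_{k+1} = f(x_k,u_k), and that the total cost satisfies ∑_{k=0}^{N-1} ℓ(x_k,u_k) ≤ N·ℓ(x_s,u_s) + δ. Then for every ε > 0, the number of time indices k ∈ {0,…,N-1} with ‖(x_k - x_s, u_k - u_s)‖ ≤ ε is at least N - (δ + C)/α(ε). -/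

import Mathlib

open Finset

/-- Theorem 3 (strict dissipativity implies the measure turnpike property).
The deviation of `(x k, u k)` from the steady state `(xs, us)` is measured by
`dist (x k) xs + dist (u k) us`. -/
theorem stmt_1 {X U : Type*} [MetricSpace X] [MetricSpace U]
    (f : X → U → X) (ℓ : X → U → ℝ) (xs : X) (us : U) (hss : f xs us = xs)
    (Λ : X → ℝ) (C : ℝ)
    (α : ℝ → ℝ) (hαmono : StrictMonoOn α (Set.Ici 0)) (hα0 : α 0 = 0)
    (N : ℕ) (x : ℕ → X) (u : ℕ → U)
    (hdyn : ∀ k < N, x (k + 1) = f (x k) (u k))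
    (hΛbd : ∀ k ≤ N, |Λ (x k)| ≤ C / 2)
    (hdiss : ∀ k < N,
      Λ (f (x k) (u k)) - Λ (x k) ≤
        -(α (dist (x k) xs + dist (u k) us)) + ℓ (x k) (u k) - ℓ xs us)
    (δ : ℝ)
    (hcost : ∑ k ∈ Finset.range N, ℓ (x k) (u k) ≤ (N : ℝ) * ℓ xs us + δ) :
    ∀ ε > 0,
      (N : ℝ) - (δ + C) / α ε ≤
        (((Finset.range N).filter
            (fun k => dist (x k) xs + dist (u k) us ≤ ε)).card : ℝ) := by
  intro ε hε
  set dev : ℕ → ℝ := fun k => dist (x k) xs + dist (u k) us with hdev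
  have hdev0 : ∀ k, 0 ≤ dev k := fun k => by positivity
  have hαε : 0 < α ε := by
    rw [← hα0]
    exact hαmono (Set.mem_Ici.mpr (le_refl 0)) (Set.mem_Ici.mpr (le_of_lt hε)) hε
  have hαnn : ∀ k, 0 ≤ α (dev k) := by
    intro k
    rw [← hα0]
    rcases eq_or_lt_of_le (hdev0 k) with h | h
    · rw [← h]
    · exact (hαmono (Set.mem_Ici.mpr (le_refl 0)) (Set.mem_Ici.mpr (hdev0 k)) h).le
  -- telescoping sum of Λ
  have htel : Λ (x N) - Λ (x 0) =
      ∑ k ∈ Finset.range N, (Λ (x (k + 1)) - Λ (x k)) := by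
    rw [Finset.sum_range_sub (fun k => Λ (x k))]
  -- sum of α(dev k) bound
  have hsum : ∑ k ∈ Finset.range N, α (dev k) ≤ δ + C := by
    have h1 : ∀ k ∈ Finset.range N,
        α (dev k) ≤ ℓ (x k) (u k) - ℓ xs us - (Λ (x (k+1)) - Λ (x k)) := by
      intro k hk
      rw [Finset.mem_range] at hk
      have := hdiss k hk
      rw [← hdyn k hk] at this
      linarith
    have h2 := Finset.sum_le_sum h1
    rw [Finset.sum_sub_distrib, Finset.sum_sub_distrib, ← htel,
      Finset.sum_const, Finset.card_range, nsmul_eq_mul] at h2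
    have hb0 := abs_le.mp (hΛbd 0 (Nat.zero_le N))
    have hbN := abs_le.mp (hΛbd N le_rfl)
    linarith
  -- bad set
  set S := (Finset.range N).filter (fun k => dev k ≤ ε) with hS
  set B := (Finset.range N).filter (fun k => ¬ dev k ≤ ε) with hB
  have hcards : S.card + B.card = N := by
    rw [hS, hB, Finset.card_filter_add_card_filter_not, Finset.card_range]
  have hBsum : (B.card : ℝ) * α ε ≤ ∑ k ∈ Finset.range N, α (dev k) := by
    calc (B.card : ℝ) * α ε = ∑ _k ∈ B, α ε := by
          rw [Finset.sum_const, nsmul_eq_mul]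
      _ ≤ ∑ k ∈ B, α (dev k) := by
          apply Finset.sum_le_sum
          intro k hk
          rw [hB, Finset.mem_filter] at hk
          exact (hαmono (Set.mem_Ici.mpr (le_of_lt hε)) (Set.mem_Ici.mpr (hdev0 k)) (lt_of_not_ge hk.2)).le
      _ ≤ ∑ k ∈ Finset.range N, α (dev k) := by
          apply Finset.sum_le_sum_of_subset_of_nonneg (Finset.filter_subset _ _)
          intro k _ _; exact hαnn k
  have hBle : (B.card : ℝ) ≤ (δ + C) / α ε := by
    rw [le_div_iff₀ hαε]
    linarith
  have : (N : ℝ) = (S.card : ℝ) + (B.card : ℝ) := by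
    rw [← Nat.cast_add, hcards]
  linarith
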